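/- Memory bound on the Wolff trellis state spaces: let S₁,…,S_{n−k} be a basis of a subspace S ≤ V = (𝔽₂²)ⁿ and 0 ≤ i ≤ n. Then log₂|fᵢ(S^⊥)| ≤ |{j : πᵢ(Sⱼ) ≠ 0 and πᵢ(Sⱼ) ≠ Sⱼ}|, the number of generators whose support straddles position i (i.e., which have a nontrivial component both among the first i positions and among the last n−i positions). In particular, for a convolutional stabilizer set of memory m, every Wolff state space has size at most 2^m. -/
import Mathlib


/-- `V = (𝔽₂²)ⁿ`, the additive group underlying the effective Pauli group `Gₙ`. -/
abbrev PV (n : ℕ) := Fin n → ZMod 2 × ZMod 2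

/-- The symplectic form `ω(v,w) = Σᵢ (aᵢb′ᵢ + a′ᵢbᵢ)` over `𝔽₂`. -/
def sympOmega {n : ℕ} (v w : PV n) : ZMod 2 :=
  ∑ i, ((v i).1 * (w i).2 + (w i).1 * (v i).2)

lemma sympOmega_add_left {n : ℕ} (a b w : PV n) :
    sympOmega (a + b) w = sympOmega a w + sympOmega b w := by
  unfold sympOmega
  rw [← Finset.sum_add_distrib]
  refine Finset.sum_congr rfl fun i _ => ?_
  simp [Prod.fst_add, Prod.snd_add, add_mul, mul_add]
  ring

lemma sympOmega_smul_left {n : ℕ} (c : ZMod 2) (a w : PV n) :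
    sympOmega (c • a) w = c * sympOmega a w := by
  unfold sympOmega
  rw [Finset.mul_sum]
  refine Finset.sum_congr rfl fun i _ => ?_
  simp [Prod.smul_fst, Prod.smul_snd, smul_eq_mul]
  ring

/-- The symplectic orthogonal `S^⊥ = {P ∈ V : ω(P,Q) = 0 for all Q ∈ S}`. -/
def sPerp {n : ℕ} (S : Submodule (ZMod 2) (PV n)) : Submodule (ZMod 2) (PV n) where
  carrier := {P | ∀ Q ∈ S, sympOmega P Q = 0}
  add_mem' := by
    intro a b ha hb Q hQ
    rw [sympOmega_add_left, ha Q hQ, hb Q hQ, add_zero]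
  zero_mem' := by
    intro Q hQ
    simp [sympOmega]
  smul_mem' := by
    intro c a ha Q hQ
    rw [sympOmega_smul_left, ha Q hQ, mul_zero]

/-- The truncation map `πᵢ : V → V`, `(P₁,…,Pₙ) ↦ (P₁,…,Pᵢ,0,…,0)`. -/
def trunc (n i : ℕ) : PV n →ₗ[ZMod 2] PV n where
  toFun v := fun j => if (j : ℕ) < i then v j else 0
  map_add' := by
    intro a b
    funext j
    by_cases h : (j : ℕ) < i <;> simp [h]
  map_smul' := by
    intro c a
    funext j
    by_cases h : (j : ℕ) < i <;> simp [h]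

lemma sympOmega_comm {n : ℕ} (v w : PV n) : sympOmega v w = sympOmega w v := by
  unfold sympOmega
  exact Finset.sum_congr rfl fun i _ => by ring

lemma sympOmega_trunc {n i : ℕ} (v w : PV n) :
    sympOmega v (trunc n i w) = sympOmega (trunc n i v) w := by
  unfold sympOmega
  refine Finset.sum_congr rfl fun j _ => ?_
  by_cases h : (j : ℕ) < i <;> simp [trunc, h]

lemma sympOmega_zero_left {n : ℕ} (w : PV n) : sympOmega 0 w = 0 := by
  simp [sympOmega]

/-- Memory bound on the Wolff trellis state spaces: log₂|fᵢ(S^⊥)| is at most the number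
of generators straddling position i; in particular for a stabilizer set of memory m
every Wolff state space has size at most 2^m. -/
theorem wolff_state_space_memory_bound (n k : ℕ) (hk : k ≤ n)
    (S : Submodule (ZMod 2) (PV n))
    (Sgen : Fin (n - k) → PV n) (hind : LinearIndependent (ZMod 2) Sgen)
    (hspan : Submodule.span (ZMod 2) (Set.range Sgen) = S) :
    (∀ i ≤ n,
      Nat.card ((fun (P : PV n) (j : Fin (n - k)) =>
            sympOmega (Sgen j) (trunc n i P)) '' (sPerp S : Set (PV n)))
        ≤ 2 ^ (Finset.univ.filter
            (fun j : Fin (n - k) =>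
              trunc n i (Sgen j) ≠ 0 ∧ trunc n i (Sgen j) ≠ Sgen j)).card) ∧
    ∀ m : ℕ,
      (∀ i ≤ n,
        (Finset.univ.filter
            (fun j : Fin (n - k) =>
              trunc n i (Sgen j) ≠ 0 ∧ trunc n i (Sgen j) ≠ Sgen j)).card ≤ m) →
      ∀ i ≤ n,
        Nat.card ((fun (P : PV n) (j : Fin (n - k)) =>
              sympOmega (Sgen j) (trunc n i P)) '' (sPerp S : Set (PV n)))
          ≤ 2 ^ m := by
  have main : ∀ i ≤ n,
      Nat.card ((fun (P : PV n) (j : Fin (n - k)) =>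
            sympOmega (Sgen j) (trunc n i P)) '' (sPerp S : Set (PV n)))
        ≤ 2 ^ (Finset.univ.filter
            (fun j : Fin (n - k) =>
              trunc n i (Sgen j) ≠ 0 ∧ trunc n i (Sgen j) ≠ Sgen j)).card := by
    intro i hi
    set J := Finset.univ.filter
        (fun j : Fin (n - k) =>
          trunc n i (Sgen j) ≠ 0 ∧ trunc n i (Sgen j) ≠ Sgen j) with hJ
    set T := ((fun (P : PV n) (j : Fin (n - k)) =>
          sympOmega (Sgen j) (trunc n i P)) '' (sPerp S : Set (PV n))) with hT
    have hzero : ∀ y ∈ T, ∀ j : Fin (n - k), j ∉ J → y j = 0 := by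
      rintro y ⟨P, hP, rfl⟩ j hj
      simp only [hJ, Finset.mem_filter, Finset.mem_univ, true_and, not_and_or,
        not_ne_iff] at hj
      show sympOmega (Sgen j) (trunc n i P) = 0
      rw [sympOmega_trunc]
      rcases hj with h | h
      · rw [h, sympOmega_zero_left]
      · rw [h, sympOmega_comm]
        exact hP (Sgen j) (hspan ▸ Submodule.subset_span ⟨j, rfl⟩)
    have hinj : Function.Injective
        (fun (y : T) (j : {x // x ∈ J}) => (y : Fin (n - k) → ZMod 2) j.1) := by
      rintro ⟨a, ha⟩ ⟨b, hb⟩ h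
      apply Subtype.ext
      funext j
      show a j = b j
      by_cases hjJ : j ∈ J
      · exact congrFun h ⟨j, hjJ⟩
      · rw [hzero a ha j hjJ, hzero b hb j hjJ]
    have h1 : Nat.card T ≤ Nat.card ({x // x ∈ J} → ZMod 2) :=
      Nat.card_le_card_of_injective _ hinj
    have h2 : Nat.card ({x // x ∈ J} → ZMod 2) = 2 ^ J.card := by
      simp [Nat.card_eq_fintype_card, Fintype.card_fun]
    rw [h2] at h1
    exact h1
  refine ⟨main, fun m hm i hi => le_trans (main i hi)
    (Nat.pow_le_pow_right (by norm_num) (hm i hi))⟩
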